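/- Let σ ∈ (0,1). There exist constants 0 < c' ≤ C' (depending on σ, the Li–Yau constants and the volume comparability constants) such that for all x, y ∈ M and t > 0: c' · t^{2σ} / ( V(x, t + d(x,y)) · (t + d(x,y))^{2σ} ) ≤ Q_t^σ(x,y) ≤ C' · t^{2σ} / ( V(x, t + d(x,y)) · (t + d(x,y))^{2σ} ). -/

import Mathlib

open MeasureTheory Metric Real Filter

lemma aux_eqOn {s b : ℝ} (x : ℝ) (hx : x ∈ Set.Ioi (0:ℝ)) :
    (|(-1:ℝ)| * x ^ ((-1:ℝ) - 1)) • (Real.exp (-(b / x ^ (-1:ℝ))) * (x ^ (-1:ℝ)) ^ (-1-s))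
      = x ^ (s - 1) * Real.exp (-(b * x)) := by
  have hx0 : (0:ℝ) < x := hx
  rw [Real.rpow_neg_one, abs_neg, abs_one, one_mul,
    show b / x⁻¹ = b * x from by field_simp,
    Real.inv_rpow hx0.le, ← Real.rpow_neg hx0.le, smul_eq_mul]
  rw [mul_comm (Real.exp _), ← mul_assoc, ← Real.rpow_add hx0]
  norm_num
  congr 1
  ring

lemma aux_integrable {s b : ℝ} (hs : 0 < s) (hb : 0 < b) :
    MeasureTheory.IntegrableOn (fun u : ℝ => Real.exp (-(b/u)) * u ^ (-1-s)) (Set.Ioi 0) := by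
  apply (integrableOn_Ioi_comp_rpow_iff (fun u : ℝ => Real.exp (-(b/u)) * u ^ (-1-s))
    (p := -1) (by norm_num)).mp
  have h0 : MeasureTheory.IntegrableOn (fun x : ℝ => x ^ (s-1) * Real.exp (-(b * x)))
      (Set.Ioi 0) := by
    have := integrableOn_rpow_mul_exp_neg_mul_rpow (p := 1) (s := s - 1) (b := b)
      (by linarith) (by norm_num) hb
    simpa [Real.rpow_one] using this
  exact h0.congr_fun (fun x hx => (aux_eqOn x hx).symm) measurableSet_Ioi

lemma aux_integral {s b : ℝ} (hs : 0 < s) (hb : 0 < b) :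
    ∫ u in Set.Ioi (0:ℝ), Real.exp (-(b/u)) * u ^ (-1-s)
      = Real.Gamma s * b ^ (-s) := by
  rw [← MeasureTheory.integral_comp_rpow_Ioi (fun u : ℝ => Real.exp (-(b/u)) * u ^ (-1-s))
    (p := -1) (by norm_num)]
  rw [setIntegral_congr_fun measurableSet_Ioi (fun x hx => aux_eqOn x hx)]
  rw [Real.integral_rpow_mul_exp_neg_mul_Ioi hs hb, Real.rpow_neg hb.le,
    one_div, Real.inv_rpow hb.le]
  ring


/-- The kernel subordinated to the heat kernel `h`, arising from the
Caffarelli–Silvestre extension problem: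
`Q_t^σ(x,y) = (t^{2σ}/(2^{2σ}Γ(σ))) ∫₀^∞ h_u(x,y) e^{-t²/(4u)} u^{-1-σ} du`. -/
noncomputable def Qker {M : Type*} (h : ℝ → M → M → ℝ) (σ t : ℝ) (x y : M) : ℝ :=
  (t ^ (2*σ) / ((2:ℝ) ^ (2*σ) * Real.Gamma σ)) *
    ∫ u in Set.Ioi (0:ℝ), h u x y * Real.exp (-(t^2)/(4*u)) * u ^ (-1-σ)

set_option maxHeartbeats 1000000 in
/-- two-sided bound
`Q_t^σ(x,y) ≍ t^{2σ} / ( V(x, t+d(x,y)) (t+d(x,y))^{2σ} )`. -/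
theorem stmt_5
    {M : Type*} [MetricSpace M] [MeasurableSpace M] [BorelSpace M]
    (μ : Measure M)
    (hVpos : ∀ (x : M) (r : ℝ), 0 < r → 0 < μ (ball x r))
    (hVfin : ∀ (x : M) (r : ℝ), 0 < r → μ (ball x r) < ⊤)
    -- volume comparability
    (ν ν' c₀ C₀ : ℝ) (hν' : 0 < ν') (hνν : ν' ≤ ν) (hc₀ : 0 < c₀) (hc₀C₀ : c₀ ≤ C₀)
    (hdoub : ∀ (x : M) (r R : ℝ), 0 < r → r ≤ R →
        c₀ * (R/r) ^ ν' ≤ (μ (ball x R)).toReal / (μ (ball x r)).toReal ∧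
        (μ (ball x R)).toReal / (μ (ball x r)).toReal ≤ C₀ * (R/r) ^ ν)
    (hcomp : ∀ (x y : M) (r : ℝ), 0 < r →
        (μ (ball x r)).toReal ≤ C₀ * (1 + dist x y / r) ^ ν * (μ (ball y r)).toReal)
    -- heat kernel with Li–Yau two-sided Gaussian estimate
    (h : ℝ → M → M → ℝ)
    (hhmeas : Measurable (fun p : ℝ × M × M => h p.1 p.2.1 p.2.2))
    (hhsym : ∀ u : ℝ, 0 < u → ∀ x y : M, h u x y = h u y x)
    (c₁ C₁ c₂ C₂ : ℝ) (hc₁ : 0 < c₁) (hC₁ : 0 < C₁) (hc₂ : 0 < c₂) (hC₂ : 0 < C₂)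
    (hLY : ∀ u : ℝ, 0 < u → ∀ x y : M,
        c₁ / (μ (ball y (Real.sqrt u))).toReal * Real.exp (-C₁ * (dist x y)^2 / u) ≤ h u x y ∧
        h u x y ≤ C₂ / (μ (ball y (Real.sqrt u))).toReal * Real.exp (-c₂ * (dist x y)^2 / u))
    (σ : ℝ) (hσ0 : 0 < σ) (hσ1 : σ < 1) :
    ∃ c' C' : ℝ, 0 < c' ∧ c' ≤ C' ∧ ∀ (x y : M) (t : ℝ), 0 < t →
      c' * (t ^ (2*σ) /
          ((μ (ball x (t + dist x y))).toReal * (t + dist x y) ^ (2*σ)))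
        ≤ Qker h σ t x y ∧
      Qker h σ t x y ≤
        C' * (t ^ (2*σ) /
          ((μ (ball x (t + dist x y))).toReal * (t + dist x y) ^ (2*σ))) := by
  rcases isEmpty_or_nonempty M with hM | hM
  · exact ⟨1, 1, one_pos, le_rfl, fun x => (IsEmpty.false x).elim⟩
  obtain ⟨x₀⟩ := hM
  have hν : 0 < ν := lt_of_lt_of_le hν' hνν
  have hVposR : ∀ (z : M) (r : ℝ), 0 < r → 0 < (μ (ball z r)).toReal :=
    fun z r hr => ENNReal.toReal_pos (hVpos z r hr).ne' (hVfin z r hr).ne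
  have hC₀1 : (1:ℝ) ≤ C₀ := by
    have h2 := (hdoub x₀ 1 1 one_pos le_rfl).2
    have hv := hVposR x₀ 1 one_pos
    rw [div_self hv.ne'] at h2
    simpa using h2
  have hΓ : 0 < Real.Gamma σ := Real.Gamma_pos_of_pos hσ0
  have hΓ2 : 0 < Real.Gamma (σ + ν/2) := Real.Gamma_pos_of_pos (by linarith)
  set a : ℝ := min c₂ 4⁻¹ / 2 with ha_def
  have ha : 0 < a := by
    have := lt_min hc₂ (by norm_num : (0:ℝ) < 4⁻¹)
    positivity
  set K : ℝ := C₀^2 * 2^ν with hK_def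
  have hK : 0 < K := by positivity
  set K₂ : ℝ := C₀^2 * 2^ν * Real.sqrt 2 ^ ν with hK₂_def
  have hK₂ : 0 < K₂ := by
    have h2 : (0:ℝ) < Real.sqrt 2 := by positivity
    positivity
  set G : ℝ := (2:ℝ)^(2*σ) * Real.Gamma σ with hG_def
  have hGpos : 0 < G := by positivity
  set Cint : ℝ := Real.Gamma σ * a ^ (-σ) + Real.Gamma (σ + ν/2) * a ^ (-(σ+ν/2))
    with hCint_def
  have hCint : 0 < Cint := by positivity
  set Cup : ℝ := C₂ * K * Cint / G with hCup_def
  set m : ℝ := c₁ / K₂ * Real.exp (-(C₁ + 4⁻¹)) * (2:ℝ) ^ (-1-σ) with hm_def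
  have hm : 0 < m := by positivity
  set clo : ℝ := m / G with hclo_def
  have hclo : 0 < clo := by positivity
  refine ⟨clo, max clo Cup, hclo, le_max_left _ _, ?_⟩
  intro x y t ht
  have hdn : (0:ℝ) ≤ dist x y := dist_nonneg
  set D : ℝ := t + dist x y with hD_def
  have hD : 0 < D := by positivity
  set V : ℝ := (μ (ball x D)).toReal with hV_def
  have hV : 0 < V := hVposR x D hD
  have hab : 0 < a * D^2 := by positivity
  set f : ℝ → ℝ := fun u => h u x y * Real.exp (-(t^2)/(4*u)) * u ^ (-1-σ) with hf_def
  have hQ : Qker h σ t x y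
      = (t ^ (2*σ) / G) * ∫ u in Set.Ioi (0:ℝ), f u := rfl
  -- nonnegativity of f
  have hh_nonneg : ∀ u : ℝ, 0 < u → 0 ≤ h u x y := by
    intro u hu
    refine le_trans ?_ (hLY u hu x y).1
    positivity
  have hf_nonneg : ∀ u ∈ Set.Ioi (0:ℝ), 0 ≤ f u := by
    intro u hu
    have hu0 : (0:ℝ) < u := hu
    have := hh_nonneg u hu0
    simp only [hf_def]
    positivity
  have hf_ae : 0 ≤ᵐ[volume.restrict (Set.Ioi (0:ℝ))] f := by
    filter_upwards [ae_restrict_mem measurableSet_Ioi] with u hu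
    exact hf_nonneg u hu
  -- measurability of f
  have hmeas_f : Measurable f := by
    have h1 : Measurable fun u : ℝ => h u x y := by
      have heq : (fun u : ℝ => h u x y)
          = (fun p : ℝ × M × M => h p.1 p.2.1 p.2.2) ∘ (fun u : ℝ => (u, x, y)) := rfl
      rw [heq]
      exact hhmeas.comp (measurable_id.prodMk measurable_const)
    apply Measurable.mul
    · apply Measurable.mul h1
      exact (measurable_const.div (measurable_const.mul measurable_id)).exp
    · exact measurable_id.pow_const _
  -- the dominating function
  set A : ℝ := C₂ * K / V with hA_def
  set B : ℝ := C₂ * K * D^ν / V with hB_def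
  have hA : 0 < A := by positivity
  have hB : 0 < B := by positivity
  set g : ℝ → ℝ := fun u =>
      A * (Real.exp (-(a*D^2/u)) * u ^ (-1-σ))
      + B * (Real.exp (-(a*D^2/u)) * u ^ (-1-(σ+ν/2))) with hg_def
  -- volume comparison for the upper bound
  have hWup : ∀ u : ℝ, 0 < u →
      V ≤ K * (1 + D^ν * u^(-(ν/2))) * (μ (ball y (Real.sqrt u))).toReal := by
    intro u hu
    set su : ℝ := Real.sqrt u with hsu_def
    have hsu : 0 < su := Real.sqrt_pos.mpr hu
    set W : ℝ := (μ (ball y su)).toReal with hW_def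
    have hWp : 0 < W := hVposR y su hsu
    have hX : (0:ℝ) ≤ D^ν * u^(-(ν/2)) := by positivity
    have hcomp' : V ≤ C₀ * 2^ν * (μ (ball y D)).toReal := by
      have h2 := hcomp x y D hD
      have h3 : (1 + dist x y / D) ^ ν ≤ 2 ^ ν := by
        apply Real.rpow_le_rpow (by positivity) ?_ hν.le
        have : dist x y / D ≤ 1 := by
          rw [div_le_one hD]
          simp only [hD_def]
          linarith
        linarith
      have hyD : 0 ≤ (μ (ball y D)).toReal := ENNReal.toReal_nonneg
      calc V ≤ C₀ * (1 + dist x y / D) ^ ν * (μ (ball y D)).toReal := h2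
        _ ≤ C₀ * 2^ν * (μ (ball y D)).toReal := by gcongr
    rcases le_total su D with hsuD | hDsu
    · -- su ≤ D
      have h1 := (hdoub y su D hsu hsuD).2
      have hyD : 0 < (μ (ball y D)).toReal := hVposR y D hD
      have h1' : (μ (ball y D)).toReal ≤ C₀ * (D/su)^ν * W :=
        (div_le_iff₀ hWp).mp h1
      have hDsuX : (D/su)^ν = D^ν * u^(-(ν/2)) := by
        have h5 : su ^ ν = u ^ (ν/2) := by
          rw [hsu_def, Real.sqrt_eq_rpow, ← Real.rpow_mul hu.le]
          congr 1
          ring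
        rw [Real.div_rpow hD.le hsu.le, h5, Real.rpow_neg hu.le, div_eq_mul_inv]
      calc V ≤ C₀ * 2^ν * (μ (ball y D)).toReal := hcomp'
        _ ≤ C₀ * 2^ν * (C₀ * (D/su)^ν * W) := by gcongr
        _ = K * (D^ν * u^(-(ν/2))) * W := by rw [hDsuX, hK_def]; ring
        _ ≤ K * (1 + D^ν * u^(-(ν/2))) * W := by gcongr; linarith
    · -- D ≤ su
      have hmono : (μ (ball y D)).toReal ≤ W := by
        apply ENNReal.toReal_mono (hVfin y su hsu).ne
        exact measure_mono (ball_subset_ball hDsu)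
      calc V ≤ C₀ * 2^ν * (μ (ball y D)).toReal := hcomp'
        _ ≤ C₀ * 2^ν * W := by gcongr
        _ ≤ K * (1 + D^ν * u^(-(ν/2))) * W := by
            apply mul_le_mul_of_nonneg_right ?_ hWp.le
            have h2p : (0:ℝ) < (2:ℝ)^ν := by positivity
            calc C₀ * 2^ν = 1 * (C₀ * 2^ν) := by ring
              _ ≤ C₀ * (C₀ * 2^ν) := by
                  apply mul_le_mul_of_nonneg_right hC₀1 (by positivity)
              _ = K * 1 := by rw [hK_def]; ring
              _ ≤ K * (1 + D^ν * u^(-(ν/2))) := by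
                  apply mul_le_mul_of_nonneg_left ?_ hK.le
                  linarith
  -- exponential combination for the upper bound
  have hexp : ∀ u : ℝ, 0 < u →
      Real.exp (-c₂ * (dist x y)^2 / u) * Real.exp (-(t^2)/(4*u))
        ≤ Real.exp (-(a*D^2/u)) := by
    intro u hu
    rw [← Real.exp_add, Real.exp_le_exp]
    have key : a * D^2 ≤ c₂ * (dist x y)^2 + t^2/4 := by
      have h1 : min c₂ 4⁻¹ ≤ c₂ := min_le_left _ _
      have h2 : min c₂ 4⁻¹ ≤ 4⁻¹ := min_le_right _ _
      have h3 : 0 < min c₂ 4⁻¹ := lt_min hc₂ (by norm_num)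
      have hD2 : D^2 ≤ 2*(t^2 + (dist x y)^2) := by
        rw [hD_def]; nlinarith [sq_nonneg (t - dist x y)]
      have s1 : min c₂ 4⁻¹ * D^2 ≤ 2*(min c₂ 4⁻¹*t^2) + 2*(min c₂ 4⁻¹*(dist x y)^2) := by
        calc min c₂ 4⁻¹ * D^2 ≤ min c₂ 4⁻¹ * (2*(t^2 + (dist x y)^2)) :=
              mul_le_mul_of_nonneg_left hD2 h3.le
          _ = 2*(min c₂ 4⁻¹*t^2) + 2*(min c₂ 4⁻¹*(dist x y)^2) := by ring
      have s2 : min c₂ 4⁻¹ * t^2 ≤ 4⁻¹ * t^2 :=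
        mul_le_mul_of_nonneg_right h2 (sq_nonneg t)
      have s3 : min c₂ 4⁻¹ * (dist x y)^2 ≤ c₂ * (dist x y)^2 :=
        mul_le_mul_of_nonneg_right h1 (sq_nonneg _)
      rw [ha_def]
      linarith
    rw [show -c₂ * (dist x y)^2 / u + -(t^2)/(4*u)
        = (-(c₂ * (dist x y)^2) + -(t^2/4))/u from by field_simp,
      show -(a*D^2/u) = (-(a*D^2))/u from by ring]
    gcongr
    linarith
  -- pointwise upper bound  f ≤ g on Ioi 0
  have hfg : ∀ u ∈ Set.Ioi (0:ℝ), f u ≤ g u := by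
    intro u hu
    have hu0 : (0:ℝ) < u := hu
    set su : ℝ := Real.sqrt u with hsu_def
    have hsu : 0 < su := Real.sqrt_pos.mpr hu0
    set W : ℝ := (μ (ball y su)).toReal with hW_def
    have hWp : 0 < W := hVposR y su hsu
    have hX : (0:ℝ) ≤ D^ν * u^(-(ν/2)) := by positivity
    have hdivW : C₂ / W ≤ C₂ * K * (1 + D^ν * u^(-(ν/2))) / V := by
      rw [div_le_div_iff₀ hWp hV]
      calc C₂ * V ≤ C₂ * (K * (1 + D^ν * u^(-(ν/2))) * W) := by
            gcongr
            exact hWup u hu0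
        _ = C₂ * K * (1 + D^ν * u^(-(ν/2))) * W := by ring
    have hP : (0:ℝ) ≤ u ^ (-1-σ) := Real.rpow_nonneg hu0.le _
    have hEt : (0:ℝ) ≤ Real.exp (-(t^2)/(4*u)) := (Real.exp_pos _).le
    calc f u = h u x y * Real.exp (-(t^2)/(4*u)) * u ^ (-1-σ) := rfl
      _ ≤ (C₂ / W * Real.exp (-c₂ * (dist x y)^2 / u))
            * Real.exp (-(t^2)/(4*u)) * u ^ (-1-σ) := by
          gcongr
          exact (hLY u hu0 x y).2
      _ = C₂ / W * (Real.exp (-c₂ * (dist x y)^2 / u) * Real.exp (-(t^2)/(4*u)))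
            * u ^ (-1-σ) := by ring
      _ ≤ C₂ / W * Real.exp (-(a*D^2/u)) * u ^ (-1-σ) := by
          gcongr
          exact hexp u hu0
      _ ≤ (C₂ * K * (1 + D^ν * u^(-(ν/2))) / V) * Real.exp (-(a*D^2/u))
            * u ^ (-1-σ) := by
          gcongr
      _ = g u := by
          simp only [hg_def, hA_def, hB_def]
          have hPP : u ^ (-(ν/2)) * u ^ (-1-σ) = u ^ (-1-(σ+ν/2)) := by
            rw [← Real.rpow_add hu0]
            congr 1
            ring
          rw [← hPP]
          ring
  -- integrability of g and f
  have hint1 : MeasureTheory.IntegrableOn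
      (fun u : ℝ => Real.exp (-(a*D^2/u)) * u ^ (-1-σ)) (Set.Ioi 0) :=
    aux_integrable hσ0 hab
  have hint2 : MeasureTheory.IntegrableOn
      (fun u : ℝ => Real.exp (-(a*D^2/u)) * u ^ (-1-(σ+ν/2))) (Set.Ioi 0) :=
    aux_integrable (by linarith : (0:ℝ) < σ + ν/2) hab
  have hg_int : MeasureTheory.IntegrableOn g (Set.Ioi 0) := by
    exact (hint1.const_mul A).add (hint2.const_mul B)
  have hf_int : MeasureTheory.IntegrableOn f (Set.Ioi 0) := by
    rw [MeasureTheory.IntegrableOn]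
    apply MeasureTheory.Integrable.mono hg_int hmeas_f.aestronglyMeasurable.restrict
    filter_upwards [ae_restrict_mem measurableSet_Ioi] with u hu
    rw [Real.norm_eq_abs, Real.norm_eq_abs, abs_of_nonneg (hf_nonneg u hu)]
    exact le_trans (hfg u hu) (le_abs_self _)
  -- the value of ∫ g
  have hg_val : ∫ u in Set.Ioi (0:ℝ), g u
      = C₂ * K * Cint / V * D ^ (-(2*σ)) := by
    simp only [hg_def]
    rw [integral_add (hint1.const_mul A) (hint2.const_mul B),
      MeasureTheory.integral_const_mul, MeasureTheory.integral_const_mul,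
      aux_integral hσ0 hab, aux_integral (by linarith : (0:ℝ) < σ + ν/2) hab]
    have hD2R : (D^2 : ℝ) = D ^ (2:ℝ) := by
      rw [← Real.rpow_natCast D 2]; norm_num
    have e1 : (a*D^2) ^ (-σ) = a^(-σ) * D ^ ((2:ℝ)*(-σ)) := by
      rw [Real.mul_rpow ha.le (by positivity), hD2R, ← Real.rpow_mul hD.le]
    have e2 : (a*D^2) ^ (-(σ+ν/2)) = a^(-(σ+ν/2)) * D ^ ((2:ℝ)*(-(σ+ν/2))) := by
      rw [Real.mul_rpow ha.le (by positivity), hD2R, ← Real.rpow_mul hD.le]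
    rw [e1, e2, hA_def, hB_def, hCint_def]
    have hDν : (0:ℝ) < D ^ ν := Real.rpow_pos_of_pos hD ν
    have e3' : D ^ ((2:ℝ)*(-(σ+ν/2))) = D ^ (-(2*σ)) * (D^ν)⁻¹ := by
      rw [← Real.rpow_neg hD.le ν, ← Real.rpow_add hD]
      congr 1
      ring
    have e4 : D ^ ((2:ℝ)*(-σ)) = D ^ (-(2*σ)) := by
      congr 1
      ring
    rw [e3', e4]
    field_simp
  have hIfg : (∫ u in Set.Ioi (0:ℝ), f u) ≤ ∫ u in Set.Ioi (0:ℝ), g u := by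
    apply integral_mono_of_nonneg hf_ae hg_int
    filter_upwards [ae_restrict_mem measurableSet_Ioi] with u hu
    exact hfg u hu
  constructor
  · -- LOWER BOUND
    rw [hQ]
    have hpref : 0 < t ^ (2*σ) / G := by positivity
    set cst : ℝ := c₁ / (K₂ * V) * Real.exp (-(C₁ + 4⁻¹)) * (2*D^2) ^ (-1-σ) with hcst_def
    have hIoc_sub : Set.Ioc (D^2) (2*D^2) ⊆ Set.Ioi (0:ℝ) := by
      intro v hv
      have hD2pos : (0:ℝ) < D^2 := by positivity
      exact lt_trans hD2pos hv.1
    have hbase : (1 + dist x y / D) ^ ν ≤ 2 ^ ν := by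
      apply Real.rpow_le_rpow (by positivity) ?_ hν.le
      have hd1 : dist x y / D ≤ 1 := by
        rw [div_le_one hD, hD_def]
        linarith
      linarith
    have hVyD : (μ (ball y D)).toReal ≤ C₀ * 2^ν * V := by
      have h2 := hcomp y x D hD
      rw [dist_comm y x] at h2
      calc (μ (ball y D)).toReal
          ≤ C₀ * (1 + dist x y / D) ^ ν * (μ (ball x D)).toReal := h2
        _ ≤ C₀ * 2^ν * V := by gcongr
    have hW2 : ∀ u ∈ Set.Ioc (D^2) (2*D^2),
        (μ (ball y (Real.sqrt u))).toReal ≤ K₂ * V := by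
      intro u hu
      have hu0 : 0 < u := hIoc_sub hu
      have hs2 : (1:ℝ) ≤ Real.sqrt 2 := by
        rw [show (1:ℝ) = Real.sqrt 1 from (Real.sqrt_one).symm]
        exact Real.sqrt_le_sqrt (by norm_num)
      have hs2D : 0 < Real.sqrt 2 * D := by positivity
      have hsqle : Real.sqrt u ≤ Real.sqrt 2 * D := by
        calc Real.sqrt u ≤ Real.sqrt (2*D^2) := Real.sqrt_le_sqrt hu.2
          _ = Real.sqrt 2 * D := by
              rw [Real.sqrt_mul (by norm_num) (D^2), Real.sqrt_sq hD.le]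
      have m1 : (μ (ball y (Real.sqrt u))).toReal
          ≤ (μ (ball y (Real.sqrt 2 * D))).toReal := by
        apply ENNReal.toReal_mono (hVfin y _ hs2D).ne
        exact measure_mono (ball_subset_ball hsqle)
      have hyD : 0 < (μ (ball y D)).toReal := hVposR y D hD
      have m2 := (hdoub y D (Real.sqrt 2 * D) hD
        (le_mul_of_one_le_left hD.le hs2)).2
      have hrat : (Real.sqrt 2 * D)/D = Real.sqrt 2 := by field_simp
      rw [hrat] at m2
      have m2' : (μ (ball y (Real.sqrt 2 * D))).toReal
          ≤ C₀ * Real.sqrt 2 ^ ν * (μ (ball y D)).toReal := (div_le_iff₀ hyD).mp m2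
      calc (μ (ball y (Real.sqrt u))).toReal
          ≤ (μ (ball y (Real.sqrt 2 * D))).toReal := m1
        _ ≤ C₀ * Real.sqrt 2 ^ ν * (μ (ball y D)).toReal := m2'
        _ ≤ C₀ * Real.sqrt 2 ^ ν * (C₀ * 2^ν * V) := by gcongr
        _ = K₂ * V := by rw [hK₂_def]; ring
    have hlow : ∀ u ∈ Set.Ioc (D^2) (2*D^2), cst ≤ f u := by
      intro u hu
      have hu0 : 0 < u := hIoc_sub hu
      have hWp : 0 < (μ (ball y (Real.sqrt u))).toReal :=
        hVposR y _ (Real.sqrt_pos.mpr hu0)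
      have s1 : c₁ / (K₂ * V) ≤ c₁ / (μ (ball y (Real.sqrt u))).toReal := by
        rw [div_le_div_iff₀ (mul_pos hK₂ hV) hWp]
        exact mul_le_mul_of_nonneg_left (hW2 u hu) hc₁.le
      have htD : t ≤ D := by rw [hD_def]; linarith
      have hdD : dist x y ≤ D := by rw [hD_def]; linarith
      have ht2 : t^2 ≤ D^2 := pow_le_pow_left₀ ht.le htD 2
      have hd2 : (dist x y)^2 ≤ D^2 := pow_le_pow_left₀ hdn hdD 2
      have hD2u : D^2 ≤ u := hu.1.le
      have s2 : Real.exp (-(C₁ + 4⁻¹))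
          ≤ Real.exp (-C₁ * (dist x y)^2 / u) * Real.exp (-(t^2)/(4*u)) := by
        rw [← Real.exp_add, Real.exp_le_exp]
        have e1 : C₁ * (dist x y)^2 / u ≤ C₁ := by
          rw [div_le_iff₀ hu0]
          calc C₁ * (dist x y)^2 ≤ C₁ * u := by
                apply mul_le_mul_of_nonneg_left (le_trans hd2 hD2u) hC₁.le
            _ = C₁ * u := rfl
        have e2 : t^2/(4*u) ≤ 4⁻¹ := by
          rw [div_le_iff₀ (by positivity)]
          calc t^2 ≤ u := le_trans ht2 hD2u
            _ = 4⁻¹ * (4*u) := by ring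
        have e3 : -C₁ * (dist x y)^2 / u = -(C₁ * (dist x y)^2 / u) := by ring
        have e4 : -(t^2)/(4*u) = -(t^2/(4*u)) := by ring
        rw [e3, e4]
        linarith
      have s3 : ((2:ℝ)*D^2) ^ (-1-σ) ≤ u ^ (-1-σ) :=
        Real.rpow_le_rpow_of_nonpos hu0 hu.2 (by linarith)
      have hcWnn : 0 ≤ c₁ / (μ (ball y (Real.sqrt u))).toReal :=
        div_nonneg hc₁.le hWp.le
      calc cst = c₁/(K₂*V) * Real.exp (-(C₁+4⁻¹)) * (2*D^2)^(-1-σ) := rfl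
        _ ≤ c₁ / (μ (ball y (Real.sqrt u))).toReal
              * (Real.exp (-C₁ * (dist x y)^2 / u) * Real.exp (-(t^2)/(4*u)))
              * u^(-1-σ) := by
            apply mul_le_mul (mul_le_mul s1 s2 (by positivity) hcWnn) s3
              (by positivity) (mul_nonneg hcWnn (by positivity))
        _ = (c₁ / (μ (ball y (Real.sqrt u))).toReal
              * Real.exp (-C₁ * (dist x y)^2 / u))
              * Real.exp (-(t^2)/(4*u)) * u^(-1-σ) := by ring
        _ ≤ h u x y * Real.exp (-(t^2)/(4*u)) * u^(-1-σ) :=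
            mul_le_mul_of_nonneg_right
              (mul_le_mul_of_nonneg_right ((hLY u hu0 x y).1) (by positivity))
              (by positivity)
        _ = f u := rfl
    have hfIoc : MeasureTheory.IntegrableOn f (Set.Ioc (D^2) (2*D^2)) :=
      hf_int.mono_set hIoc_sub
    have hcst_int : MeasureTheory.IntegrableOn (fun _ : ℝ => cst)
        (Set.Ioc (D^2) (2*D^2)) := by
      apply (integrableOn_const_iff (C := cst)).mpr
      right
      exact measure_Ioc_lt_top
    have step1 : D^2 * cst ≤ ∫ u in Set.Ioc (D^2) (2*D^2), f u := by
      have hmono := MeasureTheory.setIntegral_mono_on hcst_int hfIoc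
        measurableSet_Ioc hlow
      rwa [MeasureTheory.setIntegral_const, measureReal_def, Real.volume_Ioc,
        show 2*D^2 - D^2 = D^2 from by ring,
        ENNReal.toReal_ofReal (by positivity), smul_eq_mul] at hmono
    have step2 : (∫ u in Set.Ioc (D^2) (2*D^2), f u) ≤ ∫ u in Set.Ioi (0:ℝ), f u :=
      MeasureTheory.setIntegral_mono_set hf_int hf_ae
        (HasSubset.Subset.eventuallyLE hIoc_sub)
    have step3 : D^2 * cst ≤ ∫ u in Set.Ioi (0:ℝ), f u := le_trans step1 step2
    have hD2R : (D^2 : ℝ) = D ^ (2:ℝ) := by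
      rw [← Real.rpow_natCast D 2]; norm_num
    calc clo * (t ^ (2*σ) / (V * D ^ (2*σ)))
        = (t ^ (2*σ) / G) * (D^2 * cst) := by
          rw [hclo_def, hm_def, hcst_def]
          have q1 : ((2:ℝ)*D^2) ^ (-1-σ)
              = (2:ℝ)^(-1-σ) * D ^ ((2:ℝ)*(-1-σ)) := by
            rw [Real.mul_rpow (by norm_num) (by positivity), hD2R,
              ← Real.rpow_mul hD.le]
          have q2 : D ^ ((2:ℝ)*(-1-σ)) = (D ^ (2*σ))⁻¹ * (D^(2:ℝ))⁻¹ := by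
            rw [← Real.rpow_neg hD.le (2*σ), ← Real.rpow_neg hD.le (2:ℝ),
              ← Real.rpow_add hD]
            congr 1
            ring
          rw [q1, q2, hD2R]
          have hr1 : (0:ℝ) < D ^ (2:ℝ) := Real.rpow_pos_of_pos hD _
          have hr2 : (0:ℝ) < D ^ (2*σ) := Real.rpow_pos_of_pos hD _
          field_simp
      _ ≤ (t ^ (2*σ) / G) * ∫ u in Set.Ioi (0:ℝ), f u :=
          mul_le_mul_of_nonneg_left step3 hpref.le
  · -- UPPER BOUND
    rw [hQ]
    have hpref : 0 < t ^ (2*σ) / G := by positivity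
    calc (t ^ (2*σ) / G) * ∫ u in Set.Ioi (0:ℝ), f u
        ≤ (t ^ (2*σ) / G) * ∫ u in Set.Ioi (0:ℝ), g u := by gcongr
      _ = (t ^ (2*σ) / G) * (C₂ * K * Cint / V * D ^ (-(2*σ))) := by rw [hg_val]
      _ = Cup * (t ^ (2*σ) / (V * D ^ (2*σ))) := by
          rw [Real.rpow_neg hD.le, hCup_def]
          field_simp
      _ ≤ (max clo Cup) * (t ^ (2*σ) / (V * D ^ (2*σ))) := by
          apply mul_le_mul_of_nonneg_right (le_max_right _ _)
          positivity
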